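/- In the RRNG on a finite attributed metric dataset, for any two distinct nodes x and y, beam search (greedy search always expanding the unexpanded visited node closest to the target y) starting from an arbitrary entry node terminates at y, i.e., the target node y is reached. -/

import Mathlib

def DistinctDistances {V : Type*} (δ : V → V → ℝ) : Prop :=
  ∀ x y z w : V, x ≠ y → z ≠ w → δ x y = δ z w → (x = z ∧ y = w) ∨ (x = w ∧ y = z)

def PrunesWitness {V : Type*} (δ : V → V → ℝ) (a : V → ℝ) (E : V → V → Prop)
    (x y z : V) : Prop :=
  E x z ∧ δ x z < δ x y ∧ δ y z < δ x y ∧ a x < a z ∧ a z < a y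

def IsRRNG {V : Type*} (δ : V → V → ℝ) (a : V → ℝ) (E : V → V → Prop) : Prop :=
  (∀ x y, E x y ↔ E y x) ∧
  ∀ x y, a x < a y → (E x y ↔ ¬ ∃ z, PrunesWitness δ a E x y z)

/-- One step of (unbounded) beam search toward target `y`: expand an
unexpanded visited node `u` closest to `y`, marking it expanded and adding all
its neighbors to the visited set.  The state is `(visited, expanded)`. -/
def BeamStep {V : Type*} [MetricSpace V] (E : V → V → Prop) (y : V)
    (p q : Set V × Set V) : Prop :=
  ∃ u ∈ p.1 \ p.2, (∀ w ∈ p.1 \ p.2, dist u y ≤ dist w y) ∧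
    q = (p.1 ∪ {z | E u z}, insert u p.2)

lemma rrng_conn_aux {V : Type*} [MetricSpace V] [Fintype V]
    (a : V → ℝ) (ha : Function.Injective a)
    (E : V → V → Prop) (hE : IsRRNG (fun x y : V => dist x y) a E) :
    ∀ n : ℕ, ∀ u v : V,
      (Finset.filter (fun q : V × V => dist q.1 q.2 < dist u v) Finset.univ).card < n →
      Relation.ReflTransGen E u v := by
  intro n
  induction n with
  | zero => intro u v h; omega
  | succ n ih =>
    intro u v hcard
    by_cases huv : u = v
    · subst huv; exact Relation.ReflTransGen.refl
    have hmeas : ∀ u' v' : V, dist u' v' < dist u v →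
        (Finset.filter (fun q : V × V => dist q.1 q.2 < dist u' v') Finset.univ).card < n := by
      intro u' v' hd
      have hss : (Finset.filter (fun q : V × V => dist q.1 q.2 < dist u' v') Finset.univ)
          ⊂ (Finset.filter (fun q : V × V => dist q.1 q.2 < dist u v) Finset.univ) := by
        constructor
        · intro q hq
          simp only [Finset.mem_filter, Finset.mem_univ, true_and] at hq ⊢
          linarith
        · intro hsub
          have := hsub (by simp [hd] : (u', v') ∈ _)
          simp at this
      have := Finset.card_lt_card hss
      omega
    have key : ∀ u' v' : V, a u' < a v' → dist u' v' = dist u v →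
        Relation.ReflTransGen E u' v' := by
      intro u' v' hlt hdd
      by_cases he : E u' v'
      · exact Relation.ReflTransGen.single he
      · have hw := (hE.2 u' v' hlt).not.mp he
        push_neg at hw
        obtain ⟨z, hez, h1, h2, _, _⟩ := hw
        simp only at h1 h2
        have r1 : Relation.ReflTransGen E u' z := ih u' z (hmeas u' z (by rw [← hdd]; exact h1))
        have r2 : Relation.ReflTransGen E z v' := ih z v' (hmeas z v' (by rw [dist_comm z v', ← hdd]; exact h2))
        exact r1.trans r2
    rcases lt_trichotomy (a u) (a v) with h | h | h
    · exact key u v h rfl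
    · exact absurd (ha h) huv
    · have := key v u h (dist_comm v u)
      have hsymm : ∀ x y : V, E x y → E y x := fun x y hxy => (hE.1 x y).mp hxy
      exact (@Relation.ReflTransGen.stdSymm _ E ⟨hsymm⟩).symm _ _ this

/-- Beam search on the RRNG reaches the target `y` from an arbitrary entry
node `e`: along any run of the greedy expansion process, `y` is eventually
visited. -/
theorem rrng_beam_search_reaches_target {V : Type*} [MetricSpace V] [Fintype V]
    (a : V → ℝ) (ha : Function.Injective a)
    (hδ : DistinctDistances (fun x y : V => dist x y))
    (E : V → V → Prop) (hE : IsRRNG (fun x y : V => dist x y) a E)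
    (x y : V) (hxy : x ≠ y) (e : V)
    (p : ℕ → Set V × Set V) (h0 : p 0 = ({e}, ∅))
    (hstep : ∀ n, (∃ q, BeamStep E y (p n) q) → BeamStep E y (p n) (p (n + 1)))
    (hstuck : ∀ n, ¬ (∃ q, BeamStep E y (p n) q) → p (n + 1) = p n) :
    ∃ n, y ∈ (p n).1 := by
  classical
  -- invariants
  have hinv : ∀ n, e ∈ (p n).1 ∧ (p n).2 ⊆ (p n).1 ∧
      ∀ u ∈ (p n).2, ∀ z, E u z → z ∈ (p n).1 := by
    intro n
    induction n with
    | zero => rw [h0]; refine ⟨rfl, by simp, by simp⟩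
    | succ n ih =>
      obtain ⟨he, hsub, hcl⟩ := ih
      by_cases hs : ∃ q, BeamStep E y (p n) q
      · obtain ⟨u, hu, _, heq⟩ := hstep n hs
        rw [heq]
        refine ⟨Or.inl he, ?_, ?_⟩
        · intro w hw
          rcases hw with hw | hw
          · subst hw; exact Or.inl hu.1
          · exact Or.inl (hsub hw)
        · intro u' hu' z hz
          rcases hu' with hu' | hu'
          · subst hu'; exact Or.inr hz
          · exact Or.inl (hcl u' hu' z hz)
      · rw [hstuck n hs]; exact ⟨he, hsub, hcl⟩
  -- a step exists iff there is an unexpanded visited node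
  have hstep_exists : ∀ n, ((p n).1 \ (p n).2).Nonempty → ∃ q, BeamStep E y (p n) q := by
    intro n hne
    obtain ⟨u, hu, hmin⟩ := Set.exists_min_image ((p n).1 \ (p n).2)
      (fun w => dist w y) (Set.toFinite _) hne
    exact ⟨_, u, hu, hmin, rfl⟩
  -- eventually stuck
  have hstuck_ex : ∃ n, ¬ ∃ q, BeamStep E y (p n) q := by
    by_contra hall
    push_neg at hall
    have hgrow : ∀ n, n ≤ ((p n).2).ncard := by
      intro n
      induction n with
      | zero => exact Nat.zero_le _
      | succ n ih =>
        obtain ⟨u, hu, _, heq⟩ := hstep n (hall n)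
        have : (p (n+1)).2 = insert u (p n).2 := by rw [heq]
        rw [this, Set.ncard_insert_of_notMem hu.2 (Set.toFinite _)]
        omega
    have h1 := hgrow (Fintype.card V + 1)
    have h2 : ((p (Fintype.card V + 1)).2).ncard ≤ Fintype.card V := by
      have h2' := Set.ncard_le_ncard (Set.subset_univ (p (Fintype.card V + 1)).2) (Set.toFinite _)
      rwa [Set.ncard_univ, Nat.card_eq_fintype_card] at h2'
    omega
  obtain ⟨n, hn⟩ := hstuck_ex
  -- at a stuck state, visited = expanded, so visited is closed under E
  have hdiff : (p n).1 \ (p n).2 = ∅ := by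
    by_contra hne
    exact hn (hstep_exists n (Set.nonempty_iff_ne_empty.mpr hne))
  have hclosed : ∀ u ∈ (p n).1, ∀ z, E u z → z ∈ (p n).1 := by
    intro u hu z hz
    have hu2 : u ∈ (p n).2 := by
      by_contra h
      exact absurd (Set.mem_diff u |>.mpr ⟨hu, h⟩) (by rw [hdiff]; simp)
    exact (hinv n).2.2 u hu2 z hz
  -- everything reachable from e is visited
  have hreach : ∀ v : V, Relation.ReflTransGen E e v → v ∈ (p n).1 := by
    intro v hv
    induction hv with
    | refl => exact (hinv n).1
    | tail _ he ih => exact hclosed _ ih _ he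
  refine ⟨n, hreach y ?_⟩
  exact rrng_conn_aux a ha E hE _ e y
    (Nat.lt_succ_of_le (le_refl _))
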